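/- Let α = ∛3/2 (the real cube root of 3, divided by 2). There exists a constant c > 0 such that for all integers n₁, n₂, n₃ with n₁² + n₂² ≥ 1, one has ‖n₁α + n₂√2·α − n₃√2‖ > c/N⁵, where N = max{|n₁|, |n₂|, |n₃|}. -/

import Mathlib

/-- The distance from a real number to the nearest integer, often denoted `‖x‖`. -/
noncomputable def nearestIntDist (x : ℝ) : ℝ := |x - round x|

/-- If `p² = 2 q²` in `ℤ`, then `p = q = 0`. -/
lemma int_sq_eq_two_sq {p q : ℤ} (h : p ^ 2 = 2 * q ^ 2) : p = 0 ∧ q = 0 := by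
  have hq : q = 0 := by
    by_contra hq
    have hqR : ((q : ℝ)) ≠ 0 := Int.cast_ne_zero.mpr hq
    have h2 : ((p : ℝ) / q) ^ 2 = 2 := by
      field_simp
      exact_mod_cast (by linarith [h] : p ^ 2 = q ^ 2 * 2)
    have hsqrt : Real.sqrt 2 = |(p : ℝ) / q| := by
      rw [← h2, Real.sqrt_sq_eq_abs]
    exact irrational_sqrt_two ⟨|(p : ℚ) / q|, by push_cast; rw [← hsqrt]⟩
  refine ⟨?_, hq⟩
  have h0 : p ^ 2 = 0 := by rw [h, hq]; ring
  exact pow_eq_zero_iff (by norm_num) |>.mp h0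

/-- An irrational number satisfies no nontrivial linear equation over `ℤ`. -/
lemma irr_mul_ne {x : ℝ} (hx : Irrational x) {p q : ℤ} (hq : q ≠ 0)
    (h : (q : ℝ) * x = p) : False := by
  have hqR : ((q : ℝ)) ≠ 0 := Int.cast_ne_zero.mpr hq
  refine hx ⟨(p : ℚ) / (q : ℚ), ?_⟩
  have hqQ : ((q : ℚ)) ≠ 0 := Int.cast_ne_zero.mpr hq
  push_cast
  field_simp
  linarith [h]

lemma abs_pow3_le {x X : ℝ} (h : |x| ≤ X) : |x ^ 3| ≤ X ^ 3 := by
  rw [abs_pow]; exact pow_le_pow_left₀ (abs_nonneg x) h 3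

lemma abs_mul_sq_le {x y X Y : ℝ} (hx : |x| ≤ X) (hy : |y| ≤ Y) :
    |x * y ^ 2| ≤ X * Y ^ 2 := by
  rw [abs_mul, abs_pow]
  exact mul_le_mul hx (pow_le_pow_left₀ (abs_nonneg y) hy 2) (by positivity)
    ((abs_nonneg x).trans hx)

lemma abs_sq_mul_le {x y X Y : ℝ} (hx : |x| ≤ X) (hy : |y| ≤ Y) :
    |x ^ 2 * y| ≤ X ^ 2 * Y := by
  rw [abs_mul, abs_pow]
  exact mul_le_mul (pow_le_pow_left₀ (abs_nonneg x) hx 2) hy (abs_nonneg y)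
    (by positivity)

set_option maxHeartbeats 1000000 in
/-- Lemma 3.1 of the paper: with `α = ∛3/2`, there is a constant `c > 0` such that
for all integers `n₁, n₂, n₃` with `n₁² + n₂² ≥ 1`,
`‖n₁α + n₂√2·α − n₃√2‖ > c/N⁵` where `N = max{|n₁|, |n₂|, |n₃|}`. -/
theorem liouville_type_inequality :
    ∃ c : ℝ, 0 < c ∧ ∀ n₁ n₂ n₃ : ℤ, 1 ≤ n₁ ^ 2 + n₂ ^ 2 →
      c / ((max |n₁| (max |n₂| |n₃|) : ℤ) : ℝ) ^ 5 <
        nearestIntDist ((n₁ : ℝ) * ((3 : ℝ) ^ ((1 : ℝ) / 3) / 2)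
          + (n₂ : ℝ) * Real.sqrt 2 * ((3 : ℝ) ^ ((1 : ℝ) / 3) / 2)
          - (n₃ : ℝ) * Real.sqrt 2) := by
  refine ⟨1 / 10000000, by norm_num, ?_⟩
  intro n₁ n₂ n₃ hn
  set s : ℝ := Real.sqrt 2 with hsdef
  set θ : ℝ := (3 : ℝ) ^ ((1 : ℝ) / 3) with hθdef
  have hs2 : s ^ 2 = 2 := Real.sq_sqrt (by norm_num)
  have hs0 : 0 < s := Real.sqrt_pos.mpr (by norm_num)
  have hθ0 : 0 < θ := Real.rpow_pos_of_pos (by norm_num) _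
  have hθ3 : θ ^ 3 = 3 := by
    rw [hθdef, ← Real.rpow_natCast ((3 : ℝ) ^ ((1 : ℝ) / 3)) 3,
      ← Real.rpow_mul (by norm_num : (0:ℝ) ≤ 3)]
    norm_num
  have hsle : s < 3 / 2 := by nlinarith
  have hθle : θ < 3 / 2 := by
    by_contra hc
    push_neg at hc
    have : (3 / 2 : ℝ) ^ 3 ≤ θ ^ 3 := pow_le_pow_left₀ (by norm_num) hc 3
    rw [hθ3] at this
    norm_num at this
  have hθgt : 1 < θ := by
    by_contra hc
    push_neg at hc
    have : θ ^ 3 ≤ 1 ^ 3 := pow_le_pow_left₀ hθ0.le hc 3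
    rw [hθ3] at this
    norm_num at this
  have hθirr : Irrational θ := by
    refine irrational_nrt_of_notint_nrt 3 3 (by exact_mod_cast hθ3) ?_ (by norm_num)
    rintro ⟨y, hy⟩
    have h1 : (1 : ℝ) < (y : ℝ) := by rw [← hy]; exact hθgt
    have h2 : ((y : ℝ)) < 2 := by rw [← hy]; linarith
    have h1' : (1 : ℤ) < y := by exact_mod_cast h1
    have h2' : y < 2 := by exact_mod_cast h2
    omega
  set v : ℝ := (n₁ : ℝ) * (θ / 2) + (n₂ : ℝ) * s * (θ / 2) - (n₃ : ℝ) * s with hvdef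
  set m : ℤ := round v with hmdef
  set e : ℝ := v - (m : ℝ) with hedef
  have hdist : nearestIntDist v = |e| := by
    simp only [nearestIntDist, hedef, hmdef]
  -- the algebraic quantities
  set a : ℝ := (n₁ : ℝ) + (n₂ : ℝ) * s with hadef
  set b : ℝ := -2 * (n₃ : ℝ) * s - 2 * (m : ℝ) with hbdef
  set P : ℝ := a ^ 2 * θ ^ 2 - a * b * θ + b ^ 2 with hPdef
  set M₀ : ℤ := 3 * (n₁ ^ 3 + 6 * n₁ * n₂ ^ 2) - 8 * m ^ 3 - 48 * m * n₃ ^ 2 with hM0def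
  set M₁ : ℤ := 3 * (3 * n₁ ^ 2 * n₂ + 2 * n₂ ^ 3) - 24 * m ^ 2 * n₃ - 16 * n₃ ^ 3 with hM1def
  set D : ℤ := M₀ ^ 2 - 2 * M₁ ^ 2 with hDdef
  set N : ℤ := max |n₁| (max |n₂| |n₃|) with hNdef
  clear_value s θ v m e a b P M₀ M₁ D N
  have h1 : a * θ + b = 2 * e := by rw [hadef, hbdef, hedef, hvdef]; ring
  have h2 : (a * θ + b) * P = 3 * a ^ 3 + b ^ 3 := by
    rw [hPdef]; linear_combination a ^ 3 * hθ3
  have h3 : 3 * a ^ 3 + b ^ 3 = (M₀ : ℝ) + (M₁ : ℝ) * s := by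
    rw [hadef, hbdef, hM0def, hM1def]
    push_cast
    linear_combination (9 * (n₁:ℝ) * (n₂:ℝ) ^ 2 - 24 * (m:ℝ) * (n₃:ℝ) ^ 2
      + (3 * (n₂:ℝ) ^ 3 - 8 * (n₃:ℝ) ^ 3) * s) * hs2
  have keyA : 2 * e * P = (M₀ : ℝ) + (M₁ : ℝ) * s := by rw [← h1, h2, h3]
  have keyD : 2 * e * P * ((M₀ : ℝ) - (M₁ : ℝ) * s) = (D : ℝ) := by
    rw [keyA, hDdef]
    push_cast
    linear_combination (-(M₁:ℝ) ^ 2) * hs2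
  -- nonvanishing of a
  have hnz : n₁ ≠ 0 ∨ n₂ ≠ 0 := by
    by_contra hc
    push_neg at hc
    obtain ⟨h1', h2'⟩ := hc
    rw [h1', h2'] at hn; norm_num at hn
  have ha0 : a ≠ 0 := by
    intro hA
    rcases eq_or_ne n₂ 0 with h2' | h2'
    · have hx : (n₁ : ℝ) = 0 := by
        rw [hadef, h2'] at hA; push_cast at hA; linarith
      have hx' : n₁ = 0 := by exact_mod_cast hx
      rcases hnz with h | h
      · exact h hx'
      · exact h h2'
    · refine irr_mul_ne irrational_sqrt_two (p := -n₁) h2' ?_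
      rw [hadef] at hA; rw [← hsdef]; push_cast; linarith [hA]
  have hP0 : 0 < P := by
    rcases eq_or_ne b 0 with hb0 | hb0
    · have hPe : P = (a * θ) ^ 2 := by rw [hPdef, hb0]; ring
      rw [hPe]
      have : a * θ ≠ 0 := mul_ne_zero ha0 (ne_of_gt hθ0)
      exact sq_pos_of_ne_zero this
    · rw [hPdef, (by ring : a ^ 2 * θ ^ 2 - a * b * θ + b ^ 2
        = (a * θ - b / 2) ^ 2 + 3 / 4 * b ^ 2)]
      exact add_pos_of_nonneg_of_pos (sq_nonneg _)
        (mul_pos (by norm_num) (sq_pos_of_ne_zero hb0))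
  -- D ≠ 0
  have hD : D ≠ 0 := by
    intro hD0
    have hM : M₀ = 0 ∧ M₁ = 0 := by
      have : M₀ ^ 2 = 2 * M₁ ^ 2 := by omega
      exact int_sq_eq_two_sq this
    have hA0 : 2 * e * P = 0 := by
      rw [keyA, hM.1, hM.2]; push_cast; ring
    have he0 : e = 0 := by
      rcases mul_eq_zero.mp hA0 with h | h
      · rcases mul_eq_zero.mp h with h' | h'
        · norm_num at h'
        · exact h'
      · exact absurd h (ne_of_gt hP0)
    have hab : a * θ + b = 0 := by rw [h1, he0]; ring
    have hab2 : ((n₁:ℝ) + (n₂:ℝ) * s) * θ + (-2 * (n₃:ℝ) * s - 2 * (m:ℝ)) = 0 := by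
      rw [hadef, hbdef] at hab; exact hab
    -- derive θ ∈ ℚ(√2), contradiction
    set d : ℤ := n₁ ^ 2 - 2 * n₂ ^ 2 with hddef
    have hd : d ≠ 0 := by
      intro hd0
      have : n₁ ^ 2 = 2 * n₂ ^ 2 := by omega
      obtain ⟨e1, e2⟩ := int_sq_eq_two_sq this
      rcases hnz with h | h
      · exact h e1
      · exact h e2
    set P₀ : ℤ := 2 * m * n₁ - 4 * n₂ * n₃ with hP0def
    set P₁ : ℤ := 2 * n₁ * n₃ - 2 * m * n₂ with hP1def
    clear_value d P₀ P₁
    have hdθ : (d : ℝ) * θ = (P₀ : ℝ) + (P₁ : ℝ) * s := by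
      rw [hddef, hP0def, hP1def]
      push_cast
      linear_combination ((n₁:ℝ) - (n₂:ℝ) * s) * hab2
        + ((n₂:ℝ) ^ 2 * θ - 2 * (n₂:ℝ) * (n₃:ℝ)) * hs2
    set U : ℤ := P₀ ^ 3 + 6 * P₀ * P₁ ^ 2 with hUdef
    set V : ℤ := 3 * P₀ ^ 2 * P₁ + 2 * P₁ ^ 3 with hVdef
    clear_value U V
    have hcube : 3 * (d : ℝ) ^ 3 = (U : ℝ) + (V : ℝ) * s := by
      rw [hUdef, hVdef]
      push_cast
      linear_combination (((d:ℝ) * θ) ^ 2 + (d:ℝ) * θ * ((P₀:ℝ) + (P₁:ℝ) * s)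
        + ((P₀:ℝ) + (P₁:ℝ) * s) ^ 2) * hdθ + (-(d:ℝ) ^ 3) * hθ3
        + (3 * (P₀:ℝ) * (P₁:ℝ) ^ 2 + (P₁:ℝ) ^ 3 * s) * hs2
    have hV0 : V = 0 := by
      by_contra hV
      refine irr_mul_ne irrational_sqrt_two (p := 3 * d ^ 3 - U) hV ?_
      rw [← hsdef]
      push_cast
      linarith [hcube]
    have hP1z : P₁ = 0 := by
      rcases eq_or_ne P₁ 0 with h | h
      · exact h
      · exfalso
        have hpos : 0 < 3 * P₀ ^ 2 + 2 * P₁ ^ 2 := by positivity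
        have hz : P₁ * (3 * P₀ ^ 2 + 2 * P₁ ^ 2) = 0 := by
          rw [hVdef] at hV0; linarith [hV0]
        rcases mul_eq_zero.mp hz with h' | h'
        · exact h h'
        · omega
    refine irr_mul_ne hθirr (p := P₀) hd ?_
    rw [hdθ, hP1z]
    push_cast
    ring
  -- size bounds
  have hN1 : 1 ≤ N := by
    rcases hnz with h | h
    · rw [hNdef]
      calc (1:ℤ) ≤ |n₁| := Int.one_le_abs h
        _ ≤ _ := le_max_left _ _
    · rw [hNdef]
      calc (1:ℤ) ≤ |n₂| := Int.one_le_abs h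
        _ ≤ _ := le_trans (le_max_left _ _) (le_max_right _ _)
  have hNR1 : (1 : ℝ) ≤ (N : ℝ) := by exact_mod_cast hN1
  have hNpos : (0 : ℝ) < (N : ℝ) := lt_of_lt_of_le one_pos hNR1
  have hb1 : |(n₁ : ℝ)| ≤ (N : ℝ) := by
    rw [← Int.cast_abs, hNdef]; exact_mod_cast le_max_left |n₁| (max |n₂| |n₃|)
  have hb2 : |(n₂ : ℝ)| ≤ (N : ℝ) := by
    rw [← Int.cast_abs, hNdef]
    exact_mod_cast le_trans (le_max_left |n₂| |n₃|) (le_max_right |n₁| _)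
  have hb3 : |(n₃ : ℝ)| ≤ (N : ℝ) := by
    rw [← Int.cast_abs, hNdef]
    exact_mod_cast le_trans (le_max_right |n₂| |n₃|) (le_max_right |n₁| _)
  have hvb : |v| ≤ 4 * (N : ℝ) := by
    have t1 := abs_sub ((n₁ : ℝ) * (θ / 2) + (n₂ : ℝ) * s * (θ / 2)) ((n₃ : ℝ) * s)
    have t2 := abs_add_le ((n₁ : ℝ) * (θ / 2)) ((n₂ : ℝ) * s * (θ / 2))
    have e1 : |(n₁ : ℝ) * (θ / 2)| = |(n₁ : ℝ)| * (θ / 2) := by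
      rw [abs_mul, abs_of_pos (by linarith : (0:ℝ) < θ / 2)]
    have e2 : |(n₂ : ℝ) * s * (θ / 2)| = |(n₂ : ℝ)| * s * (θ / 2) := by
      rw [abs_mul, abs_mul, abs_of_pos hs0, abs_of_pos (by linarith : (0:ℝ) < θ / 2)]
    have e3 : |(n₃ : ℝ) * s| = |(n₃ : ℝ)| * s := by rw [abs_mul, abs_of_pos hs0]
    have c1 : |(n₁ : ℝ)| * (θ / 2) ≤ (N : ℝ) * (3 / 4) :=
      mul_le_mul hb1 (by linarith) (by linarith) (by linarith)
    have c2a : |(n₂ : ℝ)| * s ≤ (N : ℝ) * (3 / 2) :=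
      mul_le_mul hb2 hsle.le hs0.le (by linarith)
    have c2 : |(n₂ : ℝ)| * s * (θ / 2) ≤ ((N : ℝ) * (3 / 2)) * (3 / 4) :=
      mul_le_mul c2a (by linarith) (by linarith) (by positivity)
    have c3 : |(n₃ : ℝ)| * s ≤ (N : ℝ) * (3 / 2) :=
      mul_le_mul hb3 hsle.le hs0.le (by linarith)
    rw [hvdef]
    linarith [t1, t2]
  have heb : |e| ≤ 1 / 2 := by rw [hedef, hmdef]; exact abs_sub_round v
  have hmb : |(m : ℝ)| ≤ 5 * (N : ℝ) := by
    have hme : (m : ℝ) = v - e := by rw [hedef]; ring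
    rw [hme]
    calc |v - e| ≤ |v| + |e| := abs_sub _ _
      _ ≤ 4 * (N:ℝ) + 1 / 2 := by linarith
      _ ≤ 5 * (N:ℝ) := by linarith
  have hab' : |a| ≤ 3 * (N : ℝ) := by
    rw [hadef]
    calc |(n₁ : ℝ) + (n₂ : ℝ) * s| ≤ |(n₁ : ℝ)| + |(n₂ : ℝ) * s| := abs_add_le _ _
      _ = |(n₁ : ℝ)| + |(n₂ : ℝ)| * s := by rw [abs_mul, abs_of_pos hs0]
      _ ≤ (N : ℝ) + (N : ℝ) * (3 / 2) := by
          have := mul_le_mul hb2 hsle.le hs0.le (by linarith : (0:ℝ) ≤ (N:ℝ))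
          linarith
      _ ≤ 3 * (N : ℝ) := by linarith
  have hbb : |b| ≤ 13 * (N : ℝ) := by
    rw [hbdef]
    have t1 : |(-2) * (n₃ : ℝ) * s - 2 * (m : ℝ)| ≤ |(-2) * (n₃ : ℝ) * s| + |2 * (m : ℝ)| :=
      abs_sub _ _
    have e1 : |(-2) * (n₃ : ℝ) * s| = 2 * |(n₃ : ℝ)| * s := by
      rw [abs_mul, abs_mul, abs_of_pos hs0]
      norm_num
    have e2 : |2 * (m : ℝ)| = 2 * |(m : ℝ)| := by
      rw [abs_mul]; norm_num
    have c1 : |(n₃ : ℝ)| * s ≤ (N : ℝ) * (3 / 2) :=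
      mul_le_mul hb3 hsle.le hs0.le (by linarith)
    linarith [t1]
  have hθsq : θ ^ 2 ≤ 9 / 4 := by nlinarith
  have hPb : P ≤ 248 * (N : ℝ) ^ 2 := by
    have ha2 : a ^ 2 ≤ 9 * (N : ℝ) ^ 2 := by
      have := sq_abs a
      nlinarith [abs_nonneg a]
    have hb2' : b ^ 2 ≤ 169 * (N : ℝ) ^ 2 := by
      have := sq_abs b
      nlinarith [abs_nonneg b]
    have habb : |a * b| ≤ 39 * (N : ℝ) ^ 2 := by
      rw [abs_mul]
      calc |a| * |b| ≤ (3 * (N:ℝ)) * (13 * (N:ℝ)) :=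
        mul_le_mul hab' hbb (abs_nonneg b) (by positivity)
        _ = 39 * (N:ℝ) ^ 2 := by ring
    have ht1 : a ^ 2 * θ ^ 2 ≤ (9 * (N : ℝ) ^ 2) * (9 / 4) :=
      mul_le_mul ha2 hθsq (sq_nonneg θ) (by positivity)
    have hmid : -(a * b) * θ ≤ (39 * (N : ℝ) ^ 2) * (3 / 2) := by
      have h1' : -(a * b) ≤ 39 * (N : ℝ) ^ 2 := (neg_le_abs _).trans habb
      exact mul_le_mul h1' hθle.le hθ0.le (by positivity)
    rw [hPdef]
    have hNsq : (0:ℝ) ≤ (N:ℝ) ^ 2 := sq_nonneg _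
    linarith [ht1, hmid, hb2']
  have hmb3 : |(m : ℝ) ^ 3| ≤ (5 * (N : ℝ)) ^ 3 := abs_pow3_le hmb
  have hM0b : |(M₀ : ℝ)| ≤ 1261 * (N : ℝ) ^ 3 := by
    have hM0e : (M₀ : ℝ) = 3 * (n₁ : ℝ) ^ 3 + 18 * ((n₁ : ℝ) * (n₂ : ℝ) ^ 2)
        - 8 * (m : ℝ) ^ 3 - 48 * ((m : ℝ) * (n₃ : ℝ) ^ 2) := by
      rw [hM0def]; push_cast; ring
    have t1 := abs_sub (3 * (n₁ : ℝ) ^ 3 + 18 * ((n₁ : ℝ) * (n₂ : ℝ) ^ 2)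
        - 8 * (m : ℝ) ^ 3) (48 * ((m : ℝ) * (n₃ : ℝ) ^ 2))
    have t2 := abs_sub (3 * (n₁ : ℝ) ^ 3 + 18 * ((n₁ : ℝ) * (n₂ : ℝ) ^ 2))
        (8 * (m : ℝ) ^ 3)
    have t3 := abs_add_le (3 * (n₁ : ℝ) ^ 3) (18 * ((n₁ : ℝ) * (n₂ : ℝ) ^ 2))
    have e1 : |3 * (n₁ : ℝ) ^ 3| = 3 * |(n₁ : ℝ) ^ 3| := by rw [abs_mul]; norm_num
    have e2 : |18 * ((n₁ : ℝ) * (n₂ : ℝ) ^ 2)| = 18 * |(n₁ : ℝ) * (n₂ : ℝ) ^ 2| := by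
      rw [abs_mul]; norm_num
    have e3 : |8 * (m : ℝ) ^ 3| = 8 * |(m : ℝ) ^ 3| := by rw [abs_mul]; norm_num
    have e4 : |48 * ((m : ℝ) * (n₃ : ℝ) ^ 2)| = 48 * |(m : ℝ) * (n₃ : ℝ) ^ 2| := by
      rw [abs_mul]; norm_num
    have c1 : |(n₁ : ℝ) ^ 3| ≤ (N : ℝ) ^ 3 := abs_pow3_le hb1
    have c2 : |(n₁ : ℝ) * (n₂ : ℝ) ^ 2| ≤ (N : ℝ) * (N : ℝ) ^ 2 := abs_mul_sq_le hb1 hb2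
    have c4 : |(m : ℝ) * (n₃ : ℝ) ^ 2| ≤ (5 * (N : ℝ)) * (N : ℝ) ^ 2 := abs_mul_sq_le hmb hb3
    rw [hM0e]
    linarith [t1, t2, t3, e1, e2, e3, e4, c1, c2, c4, hmb3]
  have hM1b : |(M₁ : ℝ)| ≤ 631 * (N : ℝ) ^ 3 := by
    have hM1e : (M₁ : ℝ) = 9 * ((n₁ : ℝ) ^ 2 * (n₂ : ℝ)) + 6 * (n₂ : ℝ) ^ 3
        - 24 * ((m : ℝ) ^ 2 * (n₃ : ℝ)) - 16 * (n₃ : ℝ) ^ 3 := by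
      rw [hM1def]; push_cast; ring
    have t1 := abs_sub (9 * ((n₁ : ℝ) ^ 2 * (n₂ : ℝ)) + 6 * (n₂ : ℝ) ^ 3
        - 24 * ((m : ℝ) ^ 2 * (n₃ : ℝ))) (16 * (n₃ : ℝ) ^ 3)
    have t2 := abs_sub (9 * ((n₁ : ℝ) ^ 2 * (n₂ : ℝ)) + 6 * (n₂ : ℝ) ^ 3)
        (24 * ((m : ℝ) ^ 2 * (n₃ : ℝ)))
    have t3 := abs_add_le (9 * ((n₁ : ℝ) ^ 2 * (n₂ : ℝ))) (6 * (n₂ : ℝ) ^ 3)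
    have e1 : |9 * ((n₁ : ℝ) ^ 2 * (n₂ : ℝ))| = 9 * |(n₁ : ℝ) ^ 2 * (n₂ : ℝ)| := by
      rw [abs_mul]; norm_num
    have e2 : |6 * (n₂ : ℝ) ^ 3| = 6 * |(n₂ : ℝ) ^ 3| := by rw [abs_mul]; norm_num
    have e3 : |24 * ((m : ℝ) ^ 2 * (n₃ : ℝ))| = 24 * |(m : ℝ) ^ 2 * (n₃ : ℝ)| := by
      rw [abs_mul]; norm_num
    have e4 : |16 * (n₃ : ℝ) ^ 3| = 16 * |(n₃ : ℝ) ^ 3| := by rw [abs_mul]; norm_num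
    have c1 : |(n₁ : ℝ) ^ 2 * (n₂ : ℝ)| ≤ (N : ℝ) ^ 2 * (N : ℝ) := abs_sq_mul_le hb1 hb2
    have c2 : |(n₂ : ℝ) ^ 3| ≤ (N : ℝ) ^ 3 := abs_pow3_le hb2
    have c3 : |(m : ℝ) ^ 2 * (n₃ : ℝ)| ≤ (5 * (N : ℝ)) ^ 2 * (N : ℝ) := abs_sq_mul_le hmb hb3
    have c4 : |(n₃ : ℝ) ^ 3| ≤ (N : ℝ) ^ 3 := abs_pow3_le hb3
    rw [hM1e]
    linarith [t1, t2, t3, e1, e2, e3, e4, c1, c2, c3, c4]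
  have hQb : |(M₀ : ℝ) - (M₁ : ℝ) * s| ≤ 2208 * (N : ℝ) ^ 3 := by
    calc |(M₀ : ℝ) - (M₁ : ℝ) * s| ≤ |(M₀ : ℝ)| + |(M₁ : ℝ) * s| := abs_sub _ _
      _ = |(M₀ : ℝ)| + |(M₁ : ℝ)| * s := by rw [abs_mul, abs_of_pos hs0]
      _ ≤ 1261 * (N:ℝ) ^ 3 + (631 * (N:ℝ) ^ 3) * (3 / 2) := by
          have := mul_le_mul hM1b hsle.le hs0.le (by positivity : (0:ℝ) ≤ 631 * (N:ℝ) ^ 3)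
          linarith
      _ ≤ 2208 * (N:ℝ) ^ 3 := by nlinarith [pow_pos hNpos 3]
  -- conclusion
  have hD1 : (1 : ℝ) ≤ |(D : ℝ)| := by
    rw [← Int.cast_abs]
    exact_mod_cast Int.one_le_abs hD
  have hDabs : |(D : ℝ)| = 2 * |e| * P * |(M₀ : ℝ) - (M₁ : ℝ) * s| := by
    rw [← keyD, abs_mul, abs_mul, abs_mul, abs_of_pos hP0]
    norm_num
  rw [hdist]
  rw [div_lt_iff₀ (pow_pos hNpos 5)]
  have hepos : (0:ℝ) ≤ |e| := abs_nonneg e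
  have hQpos : (0:ℝ) ≤ |(M₀ : ℝ) - (M₁ : ℝ) * s| := abs_nonneg _
  have s1 : 2 * |e| * P * |(M₀ : ℝ) - (M₁ : ℝ) * s|
      ≤ 2 * |e| * (248 * (N:ℝ) ^ 2) * |(M₀ : ℝ) - (M₁ : ℝ) * s| := by
    apply mul_le_mul_of_nonneg_right _ hQpos
    exact mul_le_mul_of_nonneg_left hPb (by positivity)
  have s2 : 2 * |e| * (248 * (N:ℝ) ^ 2) * |(M₀ : ℝ) - (M₁ : ℝ) * s|
      ≤ 2 * |e| * (248 * (N:ℝ) ^ 2) * (2208 * (N:ℝ) ^ 3) :=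
    mul_le_mul_of_nonneg_left hQb (by positivity)
  have hchain : (1:ℝ) ≤ 2 * |e| * (248 * (N:ℝ) ^ 2) * (2208 * (N:ℝ) ^ 3) := by
    rw [hDabs] at hD1
    linarith [s1, s2]
  linarith [hchain]
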